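/- The function b(m,w) = |w|^q/(q m^{q-1}) for m>0, b(0,0)=0, and b(m,w)=+∞ otherwise, equals the supremum over all (α,β) ∈ ℝ × ℝ^4 with α + |β|^{q'}/q' ≤ 0 of α m + β·w, where 1/q + 1/q' = 1 and q > 1. In particular b is proper, convex, and lower semicontinuous. -/

import Mathlib

open scoped BigOperators Pointwise
open Classical

noncomputable section

/-- Euclidean norm on ℝ⁴ (as functions `Fin 4 → ℝ`). -/
def nrm4 (w : Fin 4 → ℝ) : ℝ := Real.sqrt (∑ i, (w i) ^ 2)

/-- The cost function `b(m,w) = |w|^q/(q m^{q-1})` for `m > 0`, `b(0,0) = 0`, `+∞` otherwise. -/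
def bfun (q : ℝ) (m : ℝ) (w : Fin 4 → ℝ) : EReal :=
  if 0 < m then (((nrm4 w ^ q) / (q * m ^ (q - 1)) : ℝ) : EReal)
  else if m = 0 ∧ w = 0 then (0 : EReal) else ⊤

lemma nrm4_nonneg (w : Fin 4 → ℝ) : 0 ≤ nrm4 w := Real.sqrt_nonneg _

lemma nrm4_sq (w : Fin 4 → ℝ) : nrm4 w ^ 2 = ∑ i, w i ^ 2 :=
  Real.sq_sqrt (Finset.sum_nonneg fun _ _ => sq_nonneg _)

lemma nrm4_zero : nrm4 (0 : Fin 4 → ℝ) = 0 := by simp [nrm4]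

lemma nrm4_smul (c : ℝ) (hc : 0 ≤ c) (w : Fin 4 → ℝ) :
    nrm4 (fun i => c * w i) = c * nrm4 w := by
  unfold nrm4
  have h : ∑ i, (c * w i) ^ 2 = c ^ 2 * ∑ i, w i ^ 2 := by
    rw [Finset.mul_sum]; exact Finset.sum_congr rfl fun i _ => by ring
  rw [h, Real.sqrt_mul (sq_nonneg c), Real.sqrt_sq hc]

lemma sum_sq_pos (w : Fin 4 → ℝ) (hw : w ≠ 0) : 0 < ∑ i, w i ^ 2 := by
  obtain ⟨i, hi⟩ := Function.ne_iff.1 hw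
  exact Finset.sum_pos' (fun j _ => sq_nonneg _) ⟨i, Finset.mem_univ i, sq_pos_iff.mpr hi⟩

lemma nrm4_pos (w : Fin 4 → ℝ) (hw : w ≠ 0) : 0 < nrm4 w :=
  Real.sqrt_pos.2 (sum_sq_pos w hw)

lemma cs4 (β w : Fin 4 → ℝ) : ∑ i, β i * w i ≤ nrm4 β * nrm4 w := by
  have h := Finset.sum_mul_sq_le_sq_mul_sq Finset.univ β w
  calc ∑ i, β i * w i ≤ |∑ i, β i * w i| := le_abs_self _
    _ = Real.sqrt ((∑ i, β i * w i) ^ 2) := (Real.sqrt_sq_eq_abs _).symm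
    _ ≤ Real.sqrt ((∑ i, β i ^ 2) * ∑ i, w i ^ 2) := Real.sqrt_le_sqrt h
    _ = nrm4 β * nrm4 w := Real.sqrt_mul (Finset.sum_nonneg fun _ _ => sq_nonneg _) _

lemma upper_bound {q q' : ℝ} (hpq : q.HolderConjugate q') {m : ℝ} (hm : 0 < m)
    (w : Fin 4 → ℝ) (α : ℝ) (β : Fin 4 → ℝ) (hE : α + nrm4 β ^ q' / q' ≤ 0) :
    α * m + ∑ i, β i * w i ≤ nrm4 w ^ q / (q * m ^ (q - 1)) := by
  set B := nrm4 β with hBdef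
  set W := nrm4 w with hWdef
  have hB : 0 ≤ B := nrm4_nonneg _
  have hW : 0 ≤ W := nrm4_nonneg _
  have hm1 : (0:ℝ) < m ^ (1 / q') := Real.rpow_pos_of_pos hm _
  have e1 : (B * m ^ (1 / q')) ^ q' = B ^ q' * m := by
    rw [Real.mul_rpow hB hm1.le, ← Real.rpow_mul hm.le,
      one_div, inv_mul_cancel₀ hpq.symm.ne_zero, Real.rpow_one]
  have e2 : (W / m ^ (1 / q')) ^ q = W ^ q / m ^ (q - 1) := by
    rw [Real.div_rpow hW hm1.le, ← Real.rpow_mul hm.le]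
    congr 2
    rw [one_div]
    field_simp
    exact hpq.div_conj_eq_sub_one
  have young := Real.young_inequality_of_nonneg (mul_nonneg hB hm1.le)
    (div_nonneg hW hm1.le) hpq.symm
  rw [e1, e2] at young
  have eprod : (B * m ^ (1 / q')) * (W / m ^ (1 / q')) = B * W := by
    field_simp
  rw [eprod] at young
  have h2 : α * m ≤ -(B ^ q' / q') * m :=
    mul_le_mul_of_nonneg_right (by linarith) hm.le
  have h3 : ∑ i, β i * w i ≤ B * W := cs4 β w
  have hP : (0:ℝ) < m ^ (q - 1) := Real.rpow_pos_of_pos hm _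
  have key : -(B ^ q' / q') * m + (B ^ q' * m / q' + W ^ q / m ^ (q - 1) / q)
      = W ^ q / (q * m ^ (q - 1)) := by
    ring
  linarith

lemma attained {q q' : ℝ} (hpq : q.HolderConjugate q') {m : ℝ} (hm : 0 < m)
    (w : Fin 4 → ℝ) :
    ∃ α : ℝ, ∃ β : Fin 4 → ℝ, α + nrm4 β ^ q' / q' ≤ 0 ∧
      α * m + ∑ i, β i * w i = nrm4 w ^ q / (q * m ^ (q - 1)) := by
  by_cases hw : w = 0
  · refine ⟨0, 0, ?_, ?_⟩
    · simp [nrm4_zero, Real.zero_rpow hpq.symm.ne_zero]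
    · subst hw
      simp [nrm4_zero, Real.zero_rpow hpq.ne_zero]
  · set W := nrm4 w with hWdef
    have hW : 0 < W := nrm4_pos w hw
    set t : ℝ := W ^ (q - 1) / m ^ (q - 1) with htdef
    have ht : 0 < t := div_pos (Real.rpow_pos_of_pos hW _) (Real.rpow_pos_of_pos hm _)
    refine ⟨-(t ^ q' / q'), fun i => (t / W) * w i, ?_, ?_⟩
    · have hn : nrm4 (fun i => (t / W) * w i) = t := by
        rw [nrm4_smul _ (div_nonneg ht.le hW.le), ← hWdef, div_mul_cancel₀ _ hW.ne']
      rw [hn]; simp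
    · have hn : ∑ i, ((t / W) * w i) * w i = t * W := by
        have h1 : ∑ i, ((t / W) * w i) * w i = (t / W) * ∑ i, w i ^ 2 := by
          rw [Finset.mul_sum]; exact Finset.sum_congr rfl fun i _ => by ring
        rw [h1, ← nrm4_sq, ← hWdef]
        field_simp
      rw [hn]
      have htq' : t ^ q' = W ^ q / m ^ q := by
        rw [htdef, ← Real.div_rpow hW.le hm.le, ← Real.rpow_mul (div_nonneg hW.le hm.le),
          hpq.sub_one_mul_conj, Real.div_rpow hW.le hm.le]
      have hWq : W ^ (q - 1) * W = W ^ (q:ℝ) := by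
        rw [← Real.rpow_add_one hW.ne' (q - 1)]; norm_num
      have htW : t * W = W ^ q / m ^ (q - 1) := by
        rw [htdef, div_mul_eq_mul_div, hWq]
      rw [htq', htW]
      have hmq : m ^ (q:ℝ) = m ^ (q - 1) * m := by
        rw [← Real.rpow_add_one hm.ne' (q - 1)]; norm_num
      rw [hmq]
      have hP : m ^ (q - 1) ≠ 0 := (Real.rpow_pos_of_pos hm _).ne'
      have hm' : m ≠ 0 := hm.ne'
      have hqne : q ≠ 0 := hpq.ne_zero
      have hq'ne : q' ≠ 0 := hpq.symm.ne_zero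
      have h3 : q * q' - q = q' := by
        have h1 := hpq.inv_add_inv_eq_one
        field_simp at h1
        linarith
      field_simp
      linear_combination h3

theorem stmt0 (q q' : ℝ) (hq : 1 < q) (hconj : 1 / q + 1 / q' = 1) :
    (∀ (m : ℝ) (w : Fin 4 → ℝ),
      bfun q m w =
        ⨆ p ∈ {p : ℝ × (Fin 4 → ℝ) | p.1 + nrm4 p.2 ^ q' / q' ≤ 0},
          ((p.1 * m + ∑ i, p.2 i * w i : ℝ) : EReal))
    ∧ (∀ (m : ℝ) (w : Fin 4 → ℝ), bfun q m w ≠ ⊥)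
    ∧ (∃ (m : ℝ) (w : Fin 4 → ℝ), bfun q m w ≠ ⊤)
    ∧ Convex ℝ {p : (ℝ × (Fin 4 → ℝ)) × ℝ | bfun q p.1.1 p.1.2 ≤ (p.2 : EReal)}
    ∧ LowerSemicontinuous (fun p : ℝ × (Fin 4 → ℝ) => bfun q p.1 p.2) := by
  have hpq : q.HolderConjugate q' := Real.holderConjugate_iff.mpr ⟨hq, by simpa [one_div] using hconj⟩
  have hzero_mem : ((0,0) : ℝ × (Fin 4 → ℝ)) ∈
      {p : ℝ × (Fin 4 → ℝ) | p.1 + nrm4 p.2 ^ q' / q' ≤ 0} := by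
    simp [Set.mem_setOf_eq, nrm4_zero, Real.zero_rpow hpq.symm.ne_zero]
  have rep : ∀ (m : ℝ) (w : Fin 4 → ℝ),
      bfun q m w =
        ⨆ p ∈ {p : ℝ × (Fin 4 → ℝ) | p.1 + nrm4 p.2 ^ q' / q' ≤ 0},
          ((p.1 * m + ∑ i, p.2 i * w i : ℝ) : EReal) := by
    intro m w
    rcases lt_trichotomy 0 m with hm | hm | hm
    · rw [bfun, if_pos hm]
      apply le_antisymm
      · obtain ⟨α, β, hmem, hval⟩ := attained hpq hm w
        refine le_iSup₂_of_le (α, β) hmem ?_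
        exact_mod_cast le_of_eq hval.symm
      · exact iSup₂_le fun p hp => EReal.coe_le_coe_iff.2 (upper_bound hpq hm w p.1 p.2 hp)
    · subst hm
      by_cases hw : w = 0
      · rw [bfun, if_neg (lt_irrefl 0), if_pos ⟨rfl, hw⟩]
        subst hw
        apply le_antisymm
        · refine le_iSup₂_of_le (0,0) hzero_mem ?_
          simp
        · apply iSup₂_le
          intro p hp
          simp
      · rw [bfun, if_neg (lt_irrefl 0), if_neg (by rintro ⟨_, h⟩; exact hw h)]
        symm
        rw [EReal.eq_top_iff_forall_lt]
        intro y
        have hS : 0 < ∑ i, w i ^ 2 := sum_sq_pos w hw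
        set t : ℝ := (|y| + 1) / (∑ i, w i ^ 2) with htdef
        have ht : 0 < t := div_pos (by positivity) hS
        set β : Fin 4 → ℝ := fun i => t * w i with hβdef
        have hmem : ((-(nrm4 β ^ q' / q'), β) : ℝ × (Fin 4 → ℝ)) ∈
            {p : ℝ × (Fin 4 → ℝ) | p.1 + nrm4 p.2 ^ q' / q' ≤ 0} := by
          simp [Set.mem_setOf_eq]
        have hval : (-(nrm4 β ^ q' / q')) * 0 + ∑ i, β i * w i = |y| + 1 := by
          have h1 : ∑ i, β i * w i = t * ∑ i, w i ^ 2 := by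
            rw [Finset.mul_sum]; exact Finset.sum_congr rfl fun i _ => by rw [hβdef]; ring
          rw [h1, mul_zero, zero_add, htdef, div_mul_cancel₀ _ hS.ne']
        calc (y : EReal) < ((|y| + 1 : ℝ) : EReal) := by
              exact_mod_cast lt_of_le_of_lt (le_abs_self y) (by linarith)
          _ ≤ _ := le_iSup₂_of_le _ hmem (by exact_mod_cast le_of_eq hval.symm)
    · rw [bfun, if_neg (by linarith), if_neg (by rintro ⟨h, _⟩; linarith)]
      symm
      rw [EReal.eq_top_iff_forall_lt]
      intro y
      have hmne : m ≠ 0 := by linarith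
      have hmem : (((|y| + 1) / m, (0 : Fin 4 → ℝ)) : ℝ × (Fin 4 → ℝ)) ∈
          {p : ℝ × (Fin 4 → ℝ) | p.1 + nrm4 p.2 ^ q' / q' ≤ 0} := by
        simp only [Set.mem_setOf_eq, nrm4_zero, Real.zero_rpow hpq.symm.ne_zero, zero_div,
          add_zero]
        exact le_of_lt (div_neg_of_pos_of_neg (by positivity) hm)
      calc (y : EReal) < ((|y| + 1 : ℝ) : EReal) := by
            exact_mod_cast lt_of_le_of_lt (le_abs_self y) (by linarith)
        _ ≤ _ := le_iSup₂_of_le _ hmem (by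
            rw [div_mul_cancel₀ _ hmne]; simp)
  refine ⟨rep, ?_, ?_, ?_, ?_⟩
  · intro m w
    unfold bfun
    split_ifs <;> simp
  · exact ⟨1, 0, by norm_num [bfun]⟩
  · have hset : {p : (ℝ × (Fin 4 → ℝ)) × ℝ | bfun q p.1.1 p.1.2 ≤ (p.2 : EReal)} =
        {x : (ℝ × (Fin 4 → ℝ)) × ℝ | ∀ pb : ℝ × (Fin 4 → ℝ),
          pb.1 + nrm4 pb.2 ^ q' / q' ≤ 0 →
          pb.1 * x.1.1 + ∑ i, pb.2 i * x.1.2 i ≤ x.2} := by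
      ext x
      rw [Set.mem_setOf_eq, rep, iSup₂_le_iff]
      constructor
      · intro h pb hpb
        exact EReal.coe_le_coe_iff.1 (h pb hpb)
      · intro h pb hpb
        exact EReal.coe_le_coe_iff.2 (h pb hpb)
    rw [hset]
    intro x hx y hy a b ha hb hab
    intro pb hpb
    have hx' := hx pb hpb
    have hy' := hy pb hpb
    simp only [Set.mem_setOf_eq, Prod.fst_add, Prod.snd_add, Prod.smul_fst, Prod.smul_snd,
      Pi.add_apply, Pi.smul_apply, smul_eq_mul]
    have hs : ∑ i, pb.2 i * (a * x.1.2 i + b * y.1.2 i)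
        = a * ∑ i, pb.2 i * x.1.2 i + b * ∑ i, pb.2 i * y.1.2 i := by
      rw [Finset.mul_sum, Finset.mul_sum, ← Finset.sum_add_distrib]
      exact Finset.sum_congr rfl fun i _ => by ring
    rw [hs]
    nlinarith [mul_le_mul_of_nonneg_left hx' ha, mul_le_mul_of_nonneg_left hy' hb]
  · have hfun : (fun p : ℝ × (Fin 4 → ℝ) => bfun q p.1 p.2) =
        fun p : ℝ × (Fin 4 → ℝ) =>
          ⨆ pb ∈ {p : ℝ × (Fin 4 → ℝ) | p.1 + nrm4 p.2 ^ q' / q' ≤ 0},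
            ((pb.1 * p.1 + ∑ i, pb.2 i * p.2 i : ℝ) : EReal) :=
      funext fun p => rep p.1 p.2
    rw [hfun]
    apply lowerSemicontinuous_biSup
    intro pb hpb
    apply Continuous.lowerSemicontinuous
    apply continuous_coe_real_ereal.comp
    fun_prop
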